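/- Let R be a ring and S : Mod-R a class of modules closed under quotients. Suppose M is a module satisfying the ascending chain condition on submodules that are quotients of modules in S (i.e., on 'S-torsion' submodules). Then M has a largest submodule T that is a sum of images of maps from modules in S, and if each module of S is finitely generated then T is finitely generated. -/
import Mathlib

/-- A submodule of `M` is `S`-torsion if it is the image of a (finite direct sum of)
module(s) from the class `S`. -/
def IsSTorsion (R : Type) [Ring R] (S : ModuleCat R → Prop) {M : Type}
    [AddCommGroup M] [Module R M] (T : Submodule R M) : Prop :=
  ∃ (n : ℕ) (A : Fin n → ModuleCat R) (f : ((i : Fin n) → A i) →ₗ[R] M),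
    (∀ i, S (A i)) ∧ LinearMap.range f = T

section Aux

variable {R : Type} [Ring R] (S : ModuleCat R → Prop) {M : Type}
    [AddCommGroup M] [Module R M]

lemma isSTorsion_bot : IsSTorsion R S (⊥ : Submodule R M) := by
  refine ⟨0, Fin.elim0, 0, fun i => i.elim0, ?_⟩
  simp

lemma isSTorsion_range {A : ModuleCat R} (hA : S A) (f : A →ₗ[R] M) :
    IsSTorsion R S (LinearMap.range f) := by
  refine ⟨1, fun _ => A, f.comp (LinearMap.proj 0), fun _ => hA, ?_⟩
  rw [LinearMap.range_comp_of_range_eq_top]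
  exact LinearMap.range_eq_top.2 fun a => ⟨fun _ => a, rfl⟩

lemma isSTorsion_sup {T₁ T₂ : Submodule R M} (h₁ : IsSTorsion R S T₁)
    (h₂ : IsSTorsion R S T₂) : IsSTorsion R S (T₁ ⊔ T₂) := by
  obtain ⟨n, A, f, hSA, hfr⟩ := h₁
  obtain ⟨m, B, g, hSB, hgr⟩ := h₂
  let C : Fin (n + m) → ModuleCat R := fun i => Sum.elim A B (finSumFinEquiv.symm i)
  let φ : Fin n ⊕ Fin m → Type _ := fun s => (Sum.elim A B s : ModuleCat R)
  let e : ((i : Fin (n + m)) → C i) ≃ₗ[R] ((s : Fin n ⊕ Fin m) → φ s) :=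
    LinearEquiv.piCongrLeft R φ finSumFinEquiv.symm
  let F : ((s : Fin n ⊕ Fin m) → φ s) →ₗ[R]
      ((j : Fin n) → A j) × ((k : Fin m) → B k) :=
    LinearMap.prod
      (LinearMap.pi fun j => LinearMap.proj (Sum.inl j))
      (LinearMap.pi fun k => LinearMap.proj (Sum.inr k))
  refine ⟨n + m, C, (f.coprod g).comp (F.comp e.toLinearMap), ?_, ?_⟩
  · intro i
    show S (Sum.elim A B (finSumFinEquiv.symm i))
    rcases finSumFinEquiv.symm i with j | k
    · exact hSA j
    · exact hSB k
  · rw [LinearMap.range_comp_of_range_eq_top, LinearMap.range_coprod, hfr, hgr]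
    rw [LinearMap.range_comp_of_range_eq_top]
    · refine LinearMap.range_eq_top.2 fun p => ⟨Sum.rec p.1 p.2, ?_⟩
      exact Prod.ext (funext fun j => rfl) (funext fun k => rfl)
    · exact LinearMap.range_eq_top.2 e.surjective

end Aux

/-- Let `S` be a class of modules closed under quotients, and let `M`
satisfy the ascending chain condition on `S`-torsion submodules.  Then `M` has a
largest submodule `T` that is the sum of the images of all maps from modules of `S`,
and if every module of `S` is finitely generated then `T` is finitely generated. -/
theorem stmt4 {R : Type} [Ring R] (S : ModuleCat R → Prop)
    (hquot : ∀ (A : ModuleCat R) (N : Submodule R A), S A → S (ModuleCat.of R (A ⧸ N)))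
    {M : Type} [AddCommGroup M] [Module R M]
    (hacc : ∀ c : ℕ → Submodule R M, (∀ n, c n ≤ c (n + 1)) →
      (∀ n, IsSTorsion R S (c n)) → ∃ n, ∀ m, n ≤ m → c m = c n) :
    ∃ T : Submodule R M,
      (T = ⨆ (A : ModuleCat R) (_ : S A) (f : A →ₗ[R] M), LinearMap.range f) ∧
      (∀ (A : ModuleCat R) (f : A →ₗ[R] M), S A → LinearMap.range f ≤ T) ∧
      ((∀ A : ModuleCat R, S A → Module.Finite R A) → T.FG) := by
  classical
  set T : Submodule R M := ⨆ (A : ModuleCat R) (_ : S A) (f : A →ₗ[R] M), LinearMap.range f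
    with hT
  have hle : ∀ (A : ModuleCat R) (f : A →ₗ[R] M), S A → LinearMap.range f ≤ T := by
    intro A f hA
    exact le_iSup_of_le A (le_iSup_of_le hA (le_iSup _ f))
  refine ⟨T, rfl, hle, ?_⟩
  intro hfin
  -- every S-torsion submodule is contained in T
  have htors_le : ∀ N : Submodule R M, IsSTorsion R S N → N ≤ T := by
    rintro N ⟨n, A, f, hSA, rfl⟩
    rintro x ⟨a, rfl⟩
    have : a = ∑ i, Pi.single i (a i) := (Finset.univ_sum_single a).symm
    rw [this, map_sum]
    refine Submodule.sum_mem _ fun i _ => ?_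
    refine hle (A i) (f.comp (LinearMap.single R (fun i => ↥(A i)) i)) (hSA i) ⟨a i, ?_⟩
    simp
  -- there is a maximal S-torsion submodule
  have hmax : ∃ N : Submodule R M, IsSTorsion R S N ∧
      ∀ N' : Submodule R M, IsSTorsion R S N' → N ≤ N' → N' = N := by
    by_contra h
    push_neg at h
    choose next hnext₁ hnext₂ hnext₃ using
      fun (p : {N : Submodule R M // IsSTorsion R S N}) => h p.1 p.2
    set c : ℕ → {N : Submodule R M // IsSTorsion R S N} :=
      fun n => (fun p => ⟨next p, hnext₁ p⟩)^[n] ⟨⊥, isSTorsion_bot S⟩ with hc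
    have hstep : ∀ n, c (n + 1) = ⟨next (c n), hnext₁ (c n)⟩ := by
      intro n
      simp [hc, Function.iterate_succ_apply']
    have hmono : ∀ n, (c n).1 ≤ (c (n + 1)).1 := fun n => by
      rw [hstep n]; exact hnext₂ (c n)
    obtain ⟨n, hn⟩ := hacc (fun n => (c n).1) hmono (fun n => (c n).2)
    have := hn (n + 1) (Nat.le_succ n)
    rw [hstep n] at this
    exact hnext₃ (c n) this
  obtain ⟨N, hNt, hNmax⟩ := hmax
  -- N = T
  have hTN : T = N := by
    have hTle : T ≤ N := by
      rw [hT]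
      refine iSup_le fun A => iSup_le fun hA => iSup_le fun f => ?_
      have h' : IsSTorsion R S (N ⊔ LinearMap.range f) :=
        isSTorsion_sup S hNt (isSTorsion_range S hA f)
      have := hNmax _ h' le_sup_left
      exact le_trans le_sup_right this.le
    exact le_antisymm hTle (htors_le N hNt)
  -- finiteness
  obtain ⟨n, A, f, hSA, hfr⟩ := hNt
  have : ∀ i, Module.Finite R (A i) := fun i => hfin (A i) (hSA i)
  have : Module.Finite R ((i : Fin n) → A i) := Module.Finite.pi
  have := Module.Finite.range f
  rw [hfr, ← hTN] at this
  exact Module.Finite.iff_fg.mp this
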